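/- Let 0 < γ ≤ δ ≤ 1/9 and let ω be the explicit modulus of continuity ω(ξ) = ξ − ξ^{3/2} for 0 ≤ ξ ≤ δ and ω(ξ) = δ − δ^{3/2} + γ log(1 + (1/4) log(ξ/δ)) for ξ > δ. Let A > 0 with γ < 1/(2πA), let F ≥ 0 and B > 0, set d = 2π√2, and assume ω(Bd)/d ≥ 4πF. Then for every ξ ∈ (0, d]: A γ ω(Bξ)/ξ + 2F − (1/π) ω(Bξ)/ξ < 0. -/

import Mathlib

open Real

noncomputable section

/-- The explicit modulus of continuity of Kiselev–Nazarov–Volberg: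
`ω(ξ) = ξ − ξ^{3/2}` for `0 ≤ ξ ≤ δ`, and
`ω(ξ) = δ − δ^{3/2} + γ log(1 + (1/4) log(ξ/δ))` for `ξ > δ`. -/
def qgModulus (γ δ : ℝ) (ξ : ℝ) : ℝ :=
  if ξ ≤ δ then ξ - ξ ^ ((3:ℝ)/2)
  else δ - δ ^ ((3:ℝ)/2) + γ * Real.log (1 + (1/4) * Real.log (ξ / δ))

lemma rpow_three_halves {x : ℝ} (hx : 0 < x) : x ^ ((3:ℝ)/2) = x * Real.sqrt x := by
  rw [Real.sqrt_eq_rpow, show (3:ℝ)/2 = 1 + 1/2 by norm_num, Real.rpow_add hx, Real.rpow_one]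

lemma sqrt_delta_lt {δ : ℝ} (hδ : δ ≤ 1/9) : Real.sqrt δ ≤ 1/3 := by
  have h : Real.sqrt δ ≤ Real.sqrt (1/9) := Real.sqrt_le_sqrt hδ
  have h9 : Real.sqrt (1/9) = 1/3 := by
    rw [show (1/9:ℝ) = (1/3)^2 by norm_num, Real.sqrt_sq (by norm_num)]
  linarith [h9 ▸ h]

lemma qgModulus_pos (γ δ : ℝ) (hγ : 0 < γ) (hγδ : γ ≤ δ) (hδ : δ ≤ 1/9)
    {x : ℝ} (hx : 0 < x) : 0 < qgModulus γ δ x := by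
  have hδ0 : 0 < δ := lt_of_lt_of_le hγ hγδ
  have hsδ : Real.sqrt δ ≤ 1/3 := sqrt_delta_lt hδ
  unfold qgModulus
  split_ifs with h
  · have hsx : Real.sqrt x ≤ 1/3 := le_trans (Real.sqrt_le_sqrt (le_trans h hδ)) (by
      rw [show (1/9:ℝ) = (1/3)^2 by norm_num, Real.sqrt_sq (by norm_num)])
    rw [rpow_three_halves hx]
    nlinarith [Real.sqrt_nonneg x]
  · have h1 : 0 < δ - δ ^ ((3:ℝ)/2) := by
      rw [rpow_three_halves hδ0]; nlinarith
    have h2 : 0 ≤ Real.log (x/δ) := Real.log_nonneg (by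
      rw [le_div_iff₀ hδ0]; linarith [not_le.mp h])
    have h3 : 0 ≤ Real.log (1 + (1/4) * Real.log (x / δ)) := Real.log_nonneg (by linarith)
    nlinarith

set_option maxHeartbeats 1000000 in
lemma qgModulus_ratio_anti (γ δ : ℝ) (hγ : 0 < γ) (hγδ : γ ≤ δ) (hδ : δ ≤ 1/9)
    {a b : ℝ} (ha : 0 < a) (hab : a ≤ b) :
    qgModulus γ δ b / b ≤ qgModulus γ δ a / a := by
  have hδ0 : 0 < δ := lt_of_lt_of_le hγ hγδ
  have hb : 0 < b := lt_of_lt_of_le ha hab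
  have hsδ : Real.sqrt δ ≤ 1/3 := sqrt_delta_lt hδ
  have hsδ0 : 0 ≤ Real.sqrt δ := Real.sqrt_nonneg δ
  rw [div_le_div_iff₀ hb ha]
  unfold qgModulus
  by_cases hbδ : b ≤ δ
  · have haδ : a ≤ δ := le_trans hab hbδ
    rw [if_pos hbδ, if_pos haδ, rpow_three_halves ha, rpow_three_halves hb]
    have hs : Real.sqrt a ≤ Real.sqrt b := Real.sqrt_le_sqrt hab
    nlinarith [mul_nonneg (mul_pos ha hb).le (sub_nonneg.mpr hs)]
  · have hbδ' : δ < b := not_le.mp hbδ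
    rw [if_neg hbδ]
    by_cases haδ : a ≤ δ
    · rw [if_pos haδ, rpow_three_halves ha, rpow_three_halves hδ0]
      have hsa : Real.sqrt a ≤ Real.sqrt δ := Real.sqrt_le_sqrt haδ
      have hlog1 : Real.log (b/δ) ≤ b/δ - 1 :=
        Real.log_le_sub_one_of_pos (by positivity)
      have hlog1' : 0 ≤ Real.log (b/δ) := Real.log_nonneg (by
        rw [le_div_iff₀ hδ0]; linarith)
      have hlog2 : Real.log (1 + (1/4) * Real.log (b/δ)) ≤ (1/4) * Real.log (b/δ) := by
        have := Real.log_le_sub_one_of_pos (show (0:ℝ) < 1 + (1/4) * Real.log (b/δ) by linarith)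
        linarith
      -- γ L ≤ δ/4 * (b/δ - 1) = (b - δ)/4
      have key : γ * Real.log (1 + (1/4) * Real.log (b/δ)) ≤ (b - δ)/4 := by
        have h1 : γ * Real.log (1 + (1/4) * Real.log (b/δ)) ≤ δ * ((1/4) * (b/δ - 1)) := by
          have hL : Real.log (1 + (1/4) * Real.log (b/δ)) ≤ (1/4) * (b/δ - 1) := by
            nlinarith
          have hL0 : 0 ≤ (1/4) * (b/δ - 1) := by
            have : 1 ≤ b/δ := (one_le_div hδ0).mpr (le_of_lt hbδ')
            linarith
          nlinarith [Real.log_nonneg (show (1:ℝ) ≤ 1 + (1/4) * Real.log (b/δ) by linarith)]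
        have : δ * ((1/4) * (b/δ - 1)) = (b - δ)/4 := by field_simp
        linarith
      -- goal: (δ - δ√δ + γL) * a ≤ (a - a√a) * b
      -- suffices δ - δ√δ + γL ≤ b(1-√δ) and a(1-√a) ≥ a(1-√δ)
      have h2 : δ - δ * Real.sqrt δ + γ * Real.log (1 + (1/4) * Real.log (b/δ))
          ≤ b * (1 - Real.sqrt δ) := by nlinarith
      have h3 : 0 ≤ b * (1 - Real.sqrt δ) := by nlinarith
      nlinarith [mul_le_mul_of_nonneg_left h2 ha.le,
        mul_nonneg (mul_pos ha hb).le (sub_nonneg.mpr hsa)]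
    · have haδ' : δ < a := not_le.mp (haδ)
      rw [if_neg haδ]
      set ua := 1 + (1/4) * Real.log (a/δ) with hua
      set ub := 1 + (1/4) * Real.log (b/δ) with hub
      clear_value ua ub
      have hla : 0 ≤ Real.log (a/δ) := Real.log_nonneg (by
        rw [le_div_iff₀ hδ0]; linarith)
      have hua1 : 1 ≤ ua := by rw [hua]; linarith
      have hlab : Real.log (b/δ) = Real.log (a/δ) + Real.log (b/a) := by
        rw [Real.log_div (ne_of_gt hb) (ne_of_gt hδ0), Real.log_div (ne_of_gt ha) (ne_of_gt hδ0),
          Real.log_div (ne_of_gt hb) (ne_of_gt ha)]; ring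
      have hlba : Real.log (b/a) ≤ b/a - 1 := Real.log_le_sub_one_of_pos (by positivity)
      have hlba0 : 0 ≤ Real.log (b/a) := Real.log_nonneg ((one_le_div ha).mpr hab)
      have hub_ua : ub - ua = (1/4) * Real.log (b/a) := by rw [hua, hub, hlab]; ring
      have hua0 : (0:ℝ) < ua := by linarith
      have huab : ua ≤ ub := by linarith
      have hub0 : (0:ℝ) < ub := by linarith
      -- log ub - log ua ≤ ub/ua - 1 ≤ ub - ua
      have hdiff : Real.log ub - Real.log ua ≤ ub - ua := by
        have h1 : Real.log (ub/ua) ≤ ub/ua - 1 :=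
          Real.log_le_sub_one_of_pos (div_pos hub0 hua0)
        have h2 : Real.log (ub/ua) = Real.log ub - Real.log ua :=
          Real.log_div hub0.ne' hua0.ne'
        have h3 : ub/ua - 1 ≤ ub - ua := by
          rw [div_sub_one hua0.ne', div_le_iff₀ hua0]
          nlinarith
        linarith
      have hωδ : δ/4 ≤ δ - δ ^ ((3:ℝ)/2) := by
        rw [rpow_three_halves hδ0]; nlinarith [mul_le_mul_of_nonneg_left hsδ hδ0.le]
      have hLa0 : 0 ≤ Real.log ua := Real.log_nonneg hua1
      -- goal: (ω(δ) + γ log ub) * a ≤ (ω(δ) + γ log ua) * b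
      -- i.e. a γ (log ub - log ua) ≤ (b - a) (ω(δ) + γ log ua)
      have hD0 : 0 ≤ Real.log ub - Real.log ua := by
        have := Real.log_le_log hua0 huab
        linarith
      have hkey : a * (γ * (Real.log ub - Real.log ua)) ≤ (b - a) * (δ/4) := by
        have h1 : Real.log ub - Real.log ua ≤ (1/4) * (b/a - 1) := by linarith
        have e1 : a * γ * (Real.log ub - Real.log ua) ≤ a * γ * ((1/4) * (b/a - 1)) :=
          mul_le_mul_of_nonneg_left h1 (by positivity)
        have e2 : a * γ * ((1/4) * (b/a - 1)) = γ * (b - a) / 4 := by field_simp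
        have e3 : γ * (b - a) / 4 ≤ δ * (b - a) / 4 := by nlinarith
        nlinarith
      nlinarith [mul_nonneg (sub_nonneg.mpr hab) (sub_nonneg.mpr hωδ),
        mul_nonneg (sub_nonneg.mpr hab) (mul_nonneg hγ.le hLa0)]

/-- Large-scale negativity estimate: with `d = 2π√2`, `γ < 1/(2πA)` and
`ω(Bd)/d ≥ 4πF`, for every `ξ ∈ (0, d]` one has
`A γ ω(Bξ)/ξ + 2F − (1/π) ω(Bξ)/ξ < 0`. -/
theorem large_scale_negativity (γ δ A F B : ℝ)
    (hγ : 0 < γ) (hγδ : γ ≤ δ) (hδ : δ ≤ 1/9)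
    (hA : 0 < A) (hγA : γ < 1 / (2 * Real.pi * A)) (hF : 0 ≤ F) (hB : 0 < B)
    (hωd : qgModulus γ δ (B * (2 * Real.pi * Real.sqrt 2)) / (2 * Real.pi * Real.sqrt 2)
            ≥ 4 * Real.pi * F) :
    ∀ ξ : ℝ, 0 < ξ → ξ ≤ 2 * Real.pi * Real.sqrt 2 →
      A * γ * (qgModulus γ δ (B * ξ) / ξ) + 2 * F
        - (1 / Real.pi) * (qgModulus γ δ (B * ξ) / ξ) < 0 := by
  intro ξ hξ hξd
  have hπ := Real.pi_pos
  have hs2 : (0:ℝ) < Real.sqrt 2 := Real.sqrt_pos.mpr (by norm_num)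
  set d := 2 * Real.pi * Real.sqrt 2 with hdd
  have hd0 : 0 < d := by positivity
  have hBξ : 0 < B * ξ := mul_pos hB hξ
  have hmono : qgModulus γ δ (B * d) / (B * d) ≤ qgModulus γ δ (B * ξ) / (B * ξ) :=
    qgModulus_ratio_anti γ δ hγ hγδ hδ hBξ (by nlinarith)
  have h1 : qgModulus γ δ (B * d) / d ≤ qgModulus γ δ (B * ξ) / ξ := by
    have e1 : qgModulus γ δ (B * d) / d = B * (qgModulus γ δ (B * d) / (B * d)) := by
      field_simp
    have e2 : qgModulus γ δ (B * ξ) / ξ = B * (qgModulus γ δ (B * ξ) / (B * ξ)) := by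
      field_simp
    rw [e1, e2]
    exact mul_le_mul_of_nonneg_left hmono hB.le
  set m := qgModulus γ δ (B * ξ) / ξ with hm
  have hm0 : 0 < m := div_pos (qgModulus_pos γ δ hγ hγδ hδ (mul_pos hB hξ)) hξ
  have hFm : 4 * Real.pi * F ≤ m := le_trans hωd h1
  have hAγ : A * γ * (2 * Real.pi) < 1 := by
    rw [lt_div_iff₀ (by positivity)] at hγA
    nlinarith
  rw [show A * γ * m + 2 * F - (1 / Real.pi) * m =
    (A * γ * m + 2 * F - (1 / Real.pi) * m) by rfl]
  have hinv : (1 / Real.pi) * m = m / Real.pi := by ring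
  rw [sub_neg]
  rw [hinv, lt_div_iff₀ hπ]
  nlinarith [mul_pos hm0 hπ]
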